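/- Let K ≥ 1, T ≥ 0, λ ∈ ℝ. For S = (s_0,…,s_T) ∈ {1,…,K}^{T+1} define L(S) = λ · #{t ∈ {1,…,T} : s_t ≠ s_{t−1}}. Define p(S) := e^{−L(S)} / Σ_{S' ∈ {1,…,K}^{T+1}} e^{−L(S')}. Then p(S) = (1/K) · Π_{t=1}^T q(s_t, s_{t−1}), where q(i,j) = e^{−λ}/(1 + (K−1)e^{−λ}) if i ≠ j and q(i,j) = 1/(1 + (K−1)e^{−λ}) if i = j; i.e., the normalized sequence distribution is the Markov-chain distribution with uniform initial law p(s_0) = 1/K and the stated transition probabilities. -/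

import Mathlib

lemma sum_prod_chain {α : Type*} [Fintype α] (f : α → α → ℝ) (D : ℝ)
    (h : ∀ i, ∑ j, f i j = D) (n : ℕ) :
    ∑ S : Fin (n+1) → α, ∏ t : Fin n, f (S t.succ) (S t.castSucc)
      = (Fintype.card α) * D ^ n := by
  induction n with
  | zero => simp
  | succ n ih =>
    rw [← Equiv.sum_comp (Fin.consEquiv (fun _ : Fin (n+2) => α))
      (fun S => ∏ t : Fin (n+1), f (S t.succ) (S t.castSucc))]
    rw [Fintype.sum_prod_type]
    have key : ∀ (x : α) (g : Fin (n+1) → α),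
        (∏ t : Fin (n+1), f ((Fin.cons x g : Fin (n+2) → α) t.succ)
          ((Fin.cons x g : Fin (n+2) → α) t.castSucc))
        = f (g 0) x * ∏ t : Fin n, f (g t.succ) (g t.castSucc) := by
      intro x g
      rw [Fin.prod_univ_succ]
      congr 1
    have e1 : ∀ (x : α) (g : Fin (n+1) → α),
        (fun S => ∏ t : Fin (n+1), f (S t.succ) (S t.castSucc))
          ((Fin.consEquiv (fun _ : Fin (n+2) => α)) (x, g))
        = f (g 0) x * ∏ t : Fin n, f (g t.succ) (g t.castSucc) := fun x g => key x g
    simp_rw [e1]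
    rw [Finset.sum_comm]
    have e2 : ∀ g : Fin (n+1) → α,
        ∑ x : α, f (g 0) x * ∏ t : Fin n, f (g t.succ) (g t.castSucc)
        = D * ∏ t : Fin n, f (g t.succ) (g t.castSucc) := by
      intro g
      rw [← Finset.sum_mul, h]
    simp_rw [e2, ← Finset.mul_sum, ih]
    ring

/-- Statement 4 of the Corollary in "Fitting Jump Models": with mode-sequence loss
`L(S) = λ·#{t : sₜ ≠ sₜ₋₁}`, the normalized sequence distribution is the Markov-chain
distribution with uniform initial law `1/K` and transition probabilities
`e^{-λ}/(1+(K−1)e^{-λ})` off-diagonal and `1/(1+(K−1)e^{-λ})` on the diagonal. -/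
theorem switching_loss_gives_markov_chain
    (K T : ℕ) (hK : 1 ≤ K) (lam : ℝ)
    (L : (Fin (T + 1) → Fin K) → ℝ)
    (hL : ∀ S : Fin (T + 1) → Fin K,
      L S = lam * ((Finset.univ.filter fun t : Fin T => S t.succ ≠ S t.castSucc).card : ℝ))
    (q : Fin K → Fin K → ℝ)
    (hq : ∀ i j, q i j = if i = j then 1 / (1 + ((K : ℝ) - 1) * Real.exp (-lam))
        else Real.exp (-lam) / (1 + ((K : ℝ) - 1) * Real.exp (-lam)))
    (S : Fin (T + 1) → Fin K) :
    Real.exp (-L S) / (∑ S' : Fin (T + 1) → Fin K, Real.exp (-L S'))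
      = (1 / (K : ℝ)) * ∏ t : Fin T, q (S t.succ) (S t.castSucc) := by
  set E := Real.exp (-lam) with hE
  set D := 1 + ((K : ℝ) - 1) * E with hD
  have hE0 : 0 < E := Real.exp_pos _
  have hK1 : (1:ℝ) ≤ (K:ℝ) := by exact_mod_cast hK
  have hD0 : 0 < D := by
    have : (0:ℝ) ≤ ((K:ℝ) - 1) * E := mul_nonneg (by linarith) hE0.le
    rw [hD]; linarith
  set f : Fin K → Fin K → ℝ := fun i j => if i = j then 1 else E with hf
  have hexp : ∀ S' : Fin (T+1) → Fin K,
      Real.exp (-L S') = ∏ t : Fin T, f (S' t.succ) (S' t.castSucc) := by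
    intro S'
    rw [hL, ← neg_mul, mul_comm, Real.exp_nat_mul]
    rw [← Finset.prod_const, Finset.prod_filter]
    apply Finset.prod_congr rfl
    intro t _
    by_cases hc : S' t.succ = S' t.castSucc <;> simp [hf, hc, hE]
  have hsum : (∑ S' : Fin (T+1) → Fin K, Real.exp (-L S')) = K * D ^ T := by
    have hrow : ∀ i : Fin K, ∑ j, f i j = D := by
      intro i
      have : ∀ j : Fin K, f i j = E + (if i = j then 1 - E else 0) := by
        intro j; by_cases hc : i = j <;> simp [hf, hc]
      simp_rw [this, Finset.sum_add_distrib, Finset.sum_const, Finset.sum_ite_eq,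
        Finset.mem_univ, if_true, Finset.card_univ, Fintype.card_fin, hD]
      ring
    simp_rw [hexp]
    rw [sum_prod_chain f D hrow T, Fintype.card_fin]
  rw [hexp, hsum]
  have hqf : ∀ i j, q i j = f i j / D := by
    intro i j
    by_cases hc : i = j <;> simp [hq, hf, hc]
  simp_rw [hqf]
  rw [Finset.prod_div_distrib, Finset.prod_const, Finset.card_univ, Fintype.card_fin]
  field_simp
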